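/- Suppose that n ∈ ℕ and that G₁, …, G_n are normal subgroups of a finite group G of pairwise coprime orders such that G = G₁ × ⋯ × G_n. Then G is L₉-free if and only if, for every i ∈ {1, …, n}, the group G_i is L₉-free. -/

import Mathlib

/-! ## The lattices `L₅` and `L₉` -/

/-- The pentagon lattice `L₅`. -/
inductive L5 : Type
  | E | S | U | A | F
  deriving DecidableEq

instance : Fintype L5 :=
  ⟨⟨↑[L5.E, L5.S, L5.U, L5.A, L5.F], by decide⟩, fun x => by cases x <;> decide⟩

namespace L5

/-- The order relation of `L₅`. -/
def le : L5 → L5 → Bool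
  | E, _ => true
  | _, F => true
  | S, S => true
  | S, A => true
  | U, U => true
  | A, A => true
  | _, _ => false

/-- Joins in `L₅`. -/
def sup : L5 → L5 → L5
  | E, x => x
  | x, E => x
  | F, _ | _, F => F
  | S, S => S
  | S, A | A, S => A
  | S, U | U, S => F
  | U, U => U
  | U, A | A, U => F
  | A, A => A

/-- Meets in `L₅`. -/
def inf : L5 → L5 → L5
  | E, _ | _, E => E
  | F, x => x
  | x, F => x
  | S, S => S
  | S, A | A, S => S
  | S, U | U, S => E
  | U, U => U
  | U, A | A, U => E
  | A, A => A

instance : LE L5 := ⟨fun a b => le a b = true⟩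

instance : DecidableRel ((· ≤ ·) : L5 → L5 → Prop) := fun a b =>
  inferInstanceAs (Decidable (le a b = true))

instance : PartialOrder L5 where
  le := (· ≤ ·)
  le_refl := by decide
  le_trans := by decide
  le_antisymm := by decide

instance : Lattice L5 where
  sup := sup
  le_sup_left := by decide
  le_sup_right := by decide
  sup_le := by decide
  inf := inf
  inf_le_left := by decide
  inf_le_right := by decide
  le_inf := by decide

end L5

/-- The nine-element lattice `L₉ = L₁₀ \ {V}`, where `L₁₀` is the subgroup lattice
of the dihedral group of order `8`.  It has least element `E`, greatest element `F`,
coatoms `A`, `B`, `C`, an element `D` with `E < D < A, B, C`, and atoms `S`, `T`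
(below `A`) and `U` (below `C`). -/
inductive L9 : Type
  | E | S | T | D | U | A | B | C | F
  deriving DecidableEq

instance : Fintype L9 :=
  ⟨⟨↑[L9.E, L9.S, L9.T, L9.D, L9.U, L9.A, L9.B, L9.C, L9.F], by decide⟩,
    fun x => by cases x <;> decide⟩

namespace L9

/-- The order relation of `L₉`. -/
def le : L9 → L9 → Bool
  | E, _ => true
  | _, F => true
  | S, S => true
  | S, A => true
  | T, T => true
  | T, A => true
  | D, D => true
  | D, A => true
  | D, B => true
  | D, C => true
  | U, U => true
  | U, C => true
  | A, A => true
  | B, B => true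
  | C, C => true
  | _, _ => false

/-- Joins in `L₉`. -/
def sup : L9 → L9 → L9
  | E, x => x
  | x, E => x
  | F, _ | _, F => F
  | S, S => S
  | S, T | T, S => A
  | S, D | D, S => A
  | S, U | U, S => F
  | S, A | A, S => A
  | S, B | B, S => F
  | S, C | C, S => F
  | T, T => T
  | T, D | D, T => A
  | T, U | U, T => F
  | T, A | A, T => A
  | T, B | B, T => F
  | T, C | C, T => F
  | D, D => D
  | D, U | U, D => C
  | D, A | A, D => A
  | D, B | B, D => B
  | D, C | C, D => C
  | U, U => U
  | U, A | A, U => F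
  | U, B | B, U => F
  | U, C | C, U => C
  | A, A => A
  | A, B | B, A => F
  | A, C | C, A => F
  | B, B => B
  | B, C | C, B => F
  | C, C => C

/-- Meets in `L₉`. -/
def inf : L9 → L9 → L9
  | E, _ | _, E => E
  | F, x => x
  | x, F => x
  | S, S => S
  | S, T | T, S => E
  | S, D | D, S => E
  | S, U | U, S => E
  | S, A | A, S => S
  | S, B | B, S => E
  | S, C | C, S => E
  | T, T => T
  | T, D | D, T => E
  | T, U | U, T => E
  | T, A | A, T => T
  | T, B | B, T => E
  | T, C | C, T => E
  | D, D => D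
  | D, U | U, D => E
  | D, A | A, D => D
  | D, B | B, D => D
  | D, C | C, D => D
  | U, U => U
  | U, A | A, U => E
  | U, B | B, U => E
  | U, C | C, U => U
  | A, A => A
  | A, B | B, A => D
  | A, C | C, A => D
  | B, B => B
  | B, C | C, B => D
  | C, C => C

instance : LE L9 := ⟨fun a b => le a b = true⟩

instance : DecidableRel ((· ≤ ·) : L9 → L9 → Prop) := fun a b =>
  inferInstanceAs (Decidable (le a b = true))

instance : PartialOrder L9 where
  le := (· ≤ ·)
  le_refl := by decide
  le_trans := by decide
  le_antisymm := by decide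

instance : Lattice L9 where
  sup := sup
  le_sup_left := by decide
  le_sup_right := by decide
  sup_le := by decide
  inf := inf
  inf_le_left := by decide
  inf_le_right := by decide
  le_inf := by decide

end L9

/-- A group `G` is `L`-free (for a lattice `L`) if its subgroup lattice has no
sublattice isomorphic to `L`, i.e. there is no injective map from `L` to the
subgroups of `G` carrying joins to joins and meets to intersections. -/
def IsLatticeFree (L : Type*) [Lattice L] (G : Type*) [Group G] : Prop :=
  ¬ ∃ f : L → Subgroup G, Function.Injective f ∧
      (∀ a b : L, f (a ⊔ b) = f a ⊔ f b) ∧ (∀ a b : L, f (a ⊓ b) = f a ⊓ f b)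

/-- A group is `L₉`-free if its subgroup lattice has no sublattice isomorphic to `L₉`. -/
abbrev IsL9Free (G : Type*) [Group G] : Prop := IsLatticeFree L9 G

section GroupDefs

variable {G : Type*} [Group G]

/-- The subgroup `X` centralises the subgroup `Y` elementwise. -/
def Centralises (X Y : Subgroup G) : Prop := ∀ x ∈ X, ∀ y ∈ Y, x * y = y * x

/-- The subgroup `X` normalises the subgroup `Y`, i.e. `Y` is `X`-invariant. -/
def Normalises (X Y : Subgroup G) : Prop := ∀ x ∈ X, ∀ y ∈ Y, x * y * x⁻¹ ∈ Y

/-- The centraliser `C_X(Y)` of `Y` in `X`. -/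
def centIn (X Y : Subgroup G) : Subgroup G := X ⊓ Subgroup.centralizer (Y : Set G)

/-- `Q` acts irreducibly on `P` (by conjugation): `P ≠ 1` and the only
`Q`-invariant subgroups of `P` are `1` and `P`. -/
def ActsIrreduciblyOn (Q P : Subgroup G) : Prop :=
  P ≠ ⊥ ∧ ∀ R : Subgroup G, R ≤ P → Normalises Q R → R = ⊥ ∨ R = P

/-- `Q` induces (possibly trivial) power automorphisms on `P`: every subgroup
of `P` is `Q`-invariant. -/
def InducesPowerAutosOn (Q P : Subgroup G) : Prop :=
  ∀ R : Subgroup G, R ≤ P → Normalises Q R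

/-- The subgroup `P` is abelian. -/
def IsCommSubgroup (P : Subgroup G) : Prop := ∀ x ∈ P, ∀ y ∈ P, x * y = y * x

/-- The subgroup `P` is elementary abelian. -/
def IsElemAbelian (P : Subgroup G) : Prop :=
  IsCommSubgroup P ∧ ∃ p : ℕ, p.Prime ∧ ∀ x ∈ P, x ^ p = 1

/-- `Q` is a Sylow `p`-subgroup of `B` (both subgroups of the ambient group `G`):
a `p`-subgroup of `B` whose index in `B` is prime to `p`. -/
def IsSylowIn (p : ℕ) (Q B : Subgroup G) : Prop :=
  Q ≤ B ∧ IsPGroup p ↥Q ∧ ¬ p ∣ Q.relIndex B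

/-- `Q` is a `π`-group: all primes dividing its order lie in `π`. -/
def IsPiSubgroup (π : Set ℕ) (Q : Subgroup G) : Prop :=
  ∀ p : ℕ, p.Prime → p ∣ Nat.card ↥Q → p ∈ π

/-- `O_p(L)`: the largest normal `p`-subgroup of `L`, as a subgroup of the ambient group. -/
def pCoreIn (p : ℕ) (L : Subgroup G) : Subgroup G :=
  ⨆ Q ∈ {Q : Subgroup G | Q ≤ L ∧ IsPGroup p ↥Q ∧ Normalises L Q}, Q

/-- `O_π(L)`: the largest normal `π`-subgroup of `L`, as a subgroup of the ambient group. -/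
def piCoreIn (π : Set ℕ) (L : Subgroup G) : Subgroup G :=
  ⨆ Q ∈ {Q : Subgroup G | Q ≤ L ∧ IsPiSubgroup π Q ∧ Normalises L Q}, Q

end GroupDefs

/-- A batten: a cyclic group of prime power order, a group isomorphic to `Q₈`, or
a product `QR` with `Q` normal of prime order `q`, `R` a cyclic `p`-group with
`p ≠ q` and `C_R(Q) = Φ(R) ≠ 1`. -/
def IsBattenGrp (B : Type*) [Group B] : Prop :=
  (IsCyclic B ∧ ∃ p : ℕ, p.Prime ∧ IsPGroup p B) ∨
  Nonempty (B ≃* QuaternionGroup 2) ∨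
  (∃ (Q R : Subgroup B) (q p : ℕ), q.Prime ∧ p.Prime ∧ p ≠ q ∧
    Q.Normal ∧ Nat.card ↥Q = q ∧ IsCyclic ↥R ∧ IsPGroup p ↥R ∧
    Q ⊔ R = ⊤ ∧
    R ⊓ Subgroup.centralizer (Q : Set B) = (frattini ↥R).map R.subtype ∧
    frattini ↥R ≠ ⊥)

section Batten

variable {G : Type*} [Group G]

/-- `S` is an internal decomposition of `K ≤ G` as a direct product of battens
of pairwise coprime orders (the members of `S` are the battens of `K`). -/
def IsBattenDecomp (K : Subgroup G) (S : Finset (Subgroup G)) : Prop :=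
  (∀ B ∈ S, B ≤ K ∧ Normalises K B ∧ IsBattenGrp ↥B) ∧
  (∀ B ∈ S, ∀ B' ∈ S, B ≠ B' → Nat.Coprime (Nat.card ↥B) (Nat.card ↥B')) ∧
  S.sup id = K ∧ (∏ B ∈ S, Nat.card ↥B) = Nat.card ↥K

/-- `K ≤ G` is a batten group. -/
def IsBattenGroupSub (K : Subgroup G) : Prop :=
  ∃ S : Finset (Subgroup G), IsBattenDecomp K S

/-- A cyclic `q`-group `Q` acts on the `p`-group `P` avoiding `L₉` (types
(std), (cent), (hamil)). -/
def AvoidsL9CyclicQ (Q P : Subgroup G) : Prop :=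
  IsCyclic ↥Q ∧ (∃ q : ℕ, q.Prime ∧ IsPGroup q ↥Q) ∧
  (∃ p : ℕ, p.Prime ∧ IsPGroup p ↥P) ∧
  Nat.Coprime (Nat.card ↥Q) (Nat.card ↥P) ∧ Normalises Q P ∧
  ( -- (std)
    (P = ⁅P, Q⁆ ∧ IsElemAbelian P ∧
      ∀ U : Subgroup G, U ≤ Q → ActsIrreduciblyOn U P ∨ InducesPowerAutosOn U P) ∨
    -- (cent)
    (IsElemAbelian ⁅P, Q⁆ ∧
      (∀ U : Subgroup G, U ≤ Q → ActsIrreduciblyOn U ⁅P, Q⁆ ∨ Centralises U ⁅P, Q⁆) ∧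
      IsCommSubgroup P ∧ centIn P Q ≠ ⊥ ∧ IsCyclic ↥(centIn P Q) ∧
      IsPGroup 2 ↥(centIn P Q)) ∨
    -- (hamil)
    (Nonempty (↥⁅P, Q⁆ ≃* QuaternionGroup 2) ∧
      (∃ I : Subgroup G, I ≤ P ∧ Nat.card ↥I ≤ 2 ∧ ⁅P, Q⁆ ⊓ I = ⊥ ∧ ⁅P, Q⁆ ⊔ I = P ∧
        Centralises ⁅P, Q⁆ I) ∧
      IsPGroup 3 ↥Q ∧
      Nonempty ((↥(⁅P, Q⁆ ⊔ Q) ⧸ Subgroup.center ↥(⁅P, Q⁆ ⊔ Q)) ≃*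
        ↥(alternatingGroup (Fin 4)))) )

/-- A group `Q ≅ Q₈` acts on the `p`-group `P` avoiding `L₉`. -/
def AvoidsL9Q8 (Q P : Subgroup G) : Prop :=
  Nonempty (↥Q ≃* QuaternionGroup 2) ∧ Normalises Q P ∧
  ∃ p : ℕ, p.Prime ∧ IsPGroup p ↥P ∧ p % 4 = 3 ∧ Nat.card ↥P = p ^ 2 ∧
    (∀ x ∈ Q, (∀ y ∈ P, x * y * x⁻¹ = y) → x = 1)

/-- A non-nilpotent batten `B` acts on the `p`-group `P` avoiding `L₉`
(types (Cy) and (NN)); here `𝓑(B)` is the unique normal Sylow subgroup of `B`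
(of prime order `q`) and `Z(B)` is the centre of `B`. -/
def AvoidsL9NN (B P : Subgroup G) : Prop :=
  IsBattenGrp ↥B ∧ ¬ Group.IsNilpotent ↥B ∧ Normalises B P ∧
  Nat.Coprime (Nat.card ↥B) (Nat.card ↥P) ∧
  ∃ p : ℕ, p.Prime ∧ IsPGroup p ↥P ∧
    ⁅P, centIn B B⁆ ≠ ⊥ ∧
    ∃ q : ℕ, q.Prime ∧ ∃ QB : Subgroup G, Normalises B QB ∧ IsSylowIn q QB B ∧
      Nat.card ↥QB = q ∧
      ( -- (Cy)
        (⁅P, QB⁆ = ⊥ ∧ ∀ r : ℕ, r.Prime → r ≠ q → r ∣ Nat.card ↥B →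
          ∀ R : Subgroup G, IsSylowIn r R B → AvoidsL9CyclicQ R P) ∨
        -- (NN)
        (IsElemAbelian P ∧ Nat.card ↥P = p ^ ((QB ⊔ centIn B B).relIndex B) ∧
          (∀ r : ℕ, r.Prime → r ∣ Nat.card ↥B →
            ∀ R : Subgroup G, IsSylowIn r R B → ActsIrreduciblyOn R P) ∧
          InducesPowerAutosOn (centIn B B) P) )

/-- A batten `B` acts on the `p`-group `P` avoiding `L₉`. -/
def AvoidsL9Batten (B P : Subgroup G) : Prop :=
  AvoidsL9CyclicQ B P ∨ AvoidsL9Q8 B P ∨ AvoidsL9NN B P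

/-- A cyclic group `L` acts on the `p`-group `P` avoiding `L₉`: `[P,L] ≠ 1` and
every primary component of `L` centralises `P` or acts on `P` avoiding `L₉`. -/
def AvoidsL9CyclicGroup (L P : Subgroup G) : Prop :=
  IsCyclic ↥L ∧ ⁅P, L⁆ ≠ ⊥ ∧
  ∀ q : ℕ, q.Prime → q ∣ Nat.card ↥L →
    Centralises (pCoreIn q L) P ∨ AvoidsL9CyclicQ (pCoreIn q L) P

/-- The set `π := {q ∈ π(L) | C_{O_q(L)}(H) < C_{O_q(L)}(J)}`. -/
def piHJ (L H J : Subgroup G) : Set ℕ :=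
  {q : ℕ | q.Prime ∧ q ∣ Nat.card ↥L ∧
    centIn (pCoreIn q L) H < centIn (pCoreIn q L) J}

/-- `G` belongs to the class `𝔏` with type `(N, K)`, where `S` is the set of
battens of `K`. -/
def FrakLType (N K : Subgroup G) (S : Finset (Subgroup G)) : Prop :=
  -- (𝔏1)
  N.Normal ∧ Group.IsNilpotent ↥N ∧ Nat.Coprime (Nat.card ↥N) N.index ∧
  (∀ p : ℕ, p.Prime → ∀ P : Subgroup G, IsSylowIn p P N →
    IsModularLattice (Subgroup ↥P)) ∧
  N ⊓ K = ⊥ ∧ N ⊔ K = ⊤ ∧ IsBattenDecomp K S ∧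
  -- (𝔏2)
  (∀ p : ℕ, p.Prime → p ∣ Nat.card ↥N → ∀ B ∈ S,
    Centralises B (pCoreIn p N) ∨ AvoidsL9Batten B (pCoreIn p N)) ∧
  -- (𝔏3)
  (∀ q : ℕ, q.Prime → ∀ Q : Subgroup G, IsSylowIn q Q K →
    ∀ p r : ℕ, p.Prime → r.Prime → p ≠ r →
      ¬ Centralises Q (pCoreIn p N) → ¬ Centralises Q (pCoreIn r N) →
      centIn Q (pCoreIn p N) ≠ centIn Q (pCoreIn r N)) ∧
  -- (𝔏4)
  (∀ H L J : Subgroup G, H ≤ N → IsCommSubgroup H →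
    (∀ p : ℕ, p.Prime → ∀ P : Subgroup G, IsSylowIn p P H → P ≠ ⊥ → ¬ IsCyclic ↥P) →
    L ≤ K → IsCyclic ↥L → InducesPowerAutosOn L H →
    (∀ q : ℕ, q.Prime → (q ∣ Nat.card ↥L ↔ q ∣ (centIn L H).relIndex L)) →
    J ≠ ⊥ → J ≤ N → Normalises L J → IsCommSubgroup J →
    Nat.Coprime (Nat.card ↥H) (Nat.card ↥J) → Centralises H J →
    centIn H (centIn L J) = ⊥ →
    ∃ g ∈ H ⊔ J, g ≠ 1 ∧
      ((∀ x ∈ piCoreIn (piHJ L H J) L, g * x = x * g) ∨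
       (∀ x ∈ piCoreIn {q : ℕ | q.Prime ∧ q ∉ piHJ L H J} L, g * x = x * g)))

end Batten

/-- The class `𝔏`. -/
def InFrakL (G : Type*) [Group G] : Prop :=
  ∃ (N K : Subgroup G) (S : Finset (Subgroup G)), FrakLType N K S

/-! ### Auxiliary lemmas -/

section L9Simple

variable {M : Type*} [Lattice M] {g : L9 → M}

private lemma l9_stepS (hs : ∀ a b : L9, g (a ⊔ b) = g a ⊔ g b) {x y : L9} (c : L9)
    (h : g x = g y) : g (x ⊔ c) = g (y ⊔ c) := by rw [hs, hs, h]

private lemma l9_stepI (hi : ∀ a b : L9, g (a ⊓ b) = g a ⊓ g b) {x y : L9} (c : L9)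
    (h : g x = g y) : g (x ⊓ c) = g (y ⊓ c) := by rw [hi, hi, h]

/-- `L9` is a simple lattice: any lattice homomorphism out of it that identifies two
distinct elements identifies the bottom and the top. -/
private lemma l9_collapse (hs : ∀ a b : L9, g (a ⊔ b) = g a ⊔ g b)
    (hi : ∀ a b : L9, g (a ⊓ b) = g a ⊓ g b) :
    ∀ (x y : L9), x ≠ y → g x = g y → g L9.E = g L9.F := fun x y hne h =>
  match x, y, hne, h with
  | L9.E, L9.E, hne, _ => absurd rfl hne
  | L9.E, L9.S, _, h => (h).trans ((l9_stepS hs L9.S (l9_stepI hi L9.B (l9_stepS hs L9.U h))))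
  | L9.E, L9.T, _, h => ((l9_stepI hi L9.S (l9_stepS hs L9.D h))).trans ((l9_stepS hs L9.S (l9_stepI hi L9.B (l9_stepS hs L9.U h))))
  | L9.E, L9.D, _, h => ((l9_stepI hi L9.S (l9_stepS hs L9.T h))).trans ((l9_stepS hs L9.S (l9_stepI hi L9.B (l9_stepS hs L9.U (l9_stepI hi L9.T (l9_stepS hs L9.S h))))))
  | L9.E, L9.U, _, h => ((l9_stepI hi L9.S (l9_stepS hs L9.T h))).trans ((l9_stepS hs L9.S h))
  | L9.E, L9.A, _, h => ((l9_stepI hi L9.S h)).trans ((l9_stepS hs L9.S (l9_stepI hi L9.B (l9_stepS hs L9.U h))))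
  | L9.E, L9.B, _, h => ((l9_stepI hi L9.S (l9_stepS hs L9.T h))).trans ((l9_stepS hs L9.S h))
  | L9.E, L9.C, _, h => ((l9_stepI hi L9.S (l9_stepS hs L9.T h))).trans ((l9_stepS hs L9.S h))
  | L9.E, L9.F, _, h => ((l9_stepI hi L9.S h)).trans ((l9_stepS hs L9.S h))
  | L9.S, L9.E, _, h => (h.symm).trans ((l9_stepS hs L9.S (l9_stepI hi L9.B (l9_stepS hs L9.U h))).symm)
  | L9.S, L9.S, hne, _ => absurd rfl hne
  | L9.S, L9.T, _, h => ((l9_stepI hi L9.S (l9_stepS hs L9.D (l9_stepI hi L9.T h)))).trans ((l9_stepS hs L9.S (l9_stepI hi L9.B (l9_stepS hs L9.U (l9_stepI hi L9.T h)))))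
  | L9.S, L9.D, _, h => ((l9_stepI hi L9.S (l9_stepS hs L9.T (l9_stepI hi L9.D h)))).trans ((l9_stepS hs L9.S (l9_stepI hi L9.B (l9_stepS hs L9.U (l9_stepI hi L9.T (l9_stepS hs L9.S h))))))
  | L9.S, L9.U, _, h => ((l9_stepI hi L9.S (l9_stepS hs L9.T (l9_stepI hi L9.U h)))).trans ((l9_stepS hs L9.S h))
  | L9.S, L9.A, _, h => ((l9_stepI hi L9.S (l9_stepS hs L9.D (l9_stepI hi L9.T h)))).trans ((l9_stepS hs L9.S (l9_stepI hi L9.B (l9_stepS hs L9.U (l9_stepI hi L9.T h)))))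
  | L9.S, L9.B, _, h => ((l9_stepI hi L9.S (l9_stepS hs L9.T (l9_stepI hi L9.D h)))).trans ((l9_stepS hs L9.S h))
  | L9.S, L9.C, _, h => ((l9_stepI hi L9.S (l9_stepS hs L9.T (l9_stepI hi L9.D h)))).trans ((l9_stepS hs L9.S h))
  | L9.S, L9.F, _, h => ((l9_stepI hi L9.S (l9_stepS hs L9.D (l9_stepI hi L9.T h)))).trans (h)
  | L9.T, L9.E, _, h => ((l9_stepI hi L9.S (l9_stepS hs L9.D h)).symm).trans ((l9_stepS hs L9.S (l9_stepI hi L9.B (l9_stepS hs L9.U h))).symm)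
  | L9.T, L9.S, _, h => ((l9_stepI hi L9.S h)).trans ((l9_stepS hs L9.S (l9_stepI hi L9.B (l9_stepS hs L9.U (l9_stepI hi L9.S h)))))
  | L9.T, L9.T, hne, _ => absurd rfl hne
  | L9.T, L9.D, _, h => ((l9_stepI hi L9.S (l9_stepS hs L9.T h))).trans ((l9_stepS hs L9.S (l9_stepI hi L9.B (l9_stepS hs L9.U (l9_stepI hi L9.S (l9_stepS hs L9.T h))))))
  | L9.T, L9.U, _, h => ((l9_stepI hi L9.S (l9_stepS hs L9.T h))).trans ((l9_stepS hs L9.S (l9_stepI hi L9.U h)))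
  | L9.T, L9.A, _, h => ((l9_stepI hi L9.S h)).trans ((l9_stepS hs L9.S (l9_stepI hi L9.B (l9_stepS hs L9.U (l9_stepI hi L9.S h)))))
  | L9.T, L9.B, _, h => ((l9_stepI hi L9.S (l9_stepS hs L9.T h))).trans ((l9_stepS hs L9.S (l9_stepI hi L9.B h)))
  | L9.T, L9.C, _, h => ((l9_stepI hi L9.S (l9_stepS hs L9.T h))).trans ((l9_stepS hs L9.S (l9_stepI hi L9.U h)))
  | L9.T, L9.F, _, h => ((l9_stepI hi L9.S h)).trans ((l9_stepS hs L9.S (l9_stepI hi L9.U h)))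
  | L9.D, L9.E, _, h => ((l9_stepI hi L9.S (l9_stepS hs L9.T h)).symm).trans ((l9_stepS hs L9.S (l9_stepI hi L9.B (l9_stepS hs L9.U (l9_stepI hi L9.T (l9_stepS hs L9.S h))))).symm)
  | L9.D, L9.S, _, h => ((l9_stepI hi L9.S h)).trans ((l9_stepS hs L9.S (l9_stepI hi L9.U (l9_stepS hs L9.B h))))
  | L9.D, L9.T, _, h => ((l9_stepI hi L9.S (l9_stepS hs L9.D h))).trans ((l9_stepS hs L9.S (l9_stepI hi L9.U (l9_stepS hs L9.B h))))
  | L9.D, L9.D, hne, _ => absurd rfl hne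
  | L9.D, L9.U, _, h => ((l9_stepI hi L9.S (l9_stepS hs L9.B h))).trans ((l9_stepS hs L9.S (l9_stepI hi L9.U h)))
  | L9.D, L9.A, _, h => ((l9_stepI hi L9.S h)).trans ((l9_stepS hs L9.S (l9_stepI hi L9.U (l9_stepS hs L9.B h))))
  | L9.D, L9.B, _, h => ((l9_stepI hi L9.S (l9_stepS hs L9.U h))).trans ((l9_stepS hs L9.S (l9_stepI hi L9.U (l9_stepS hs L9.S h))))
  | L9.D, L9.C, _, h => ((l9_stepI hi L9.S (l9_stepS hs L9.B h))).trans ((l9_stepS hs L9.S (l9_stepI hi L9.U h)))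
  | L9.D, L9.F, _, h => ((l9_stepI hi L9.S h)).trans ((l9_stepS hs L9.S (l9_stepI hi L9.U h)))
  | L9.U, L9.E, _, h => ((l9_stepI hi L9.S (l9_stepS hs L9.T h)).symm).trans ((l9_stepS hs L9.S h).symm)
  | L9.U, L9.S, _, h => ((l9_stepI hi L9.S h)).trans ((l9_stepS hs L9.S (l9_stepI hi L9.B (l9_stepS hs L9.U h))))
  | L9.U, L9.T, _, h => ((l9_stepI hi L9.S (l9_stepS hs L9.D h))).trans ((l9_stepS hs L9.S (l9_stepI hi L9.B (l9_stepS hs L9.U h))))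
  | L9.U, L9.D, _, h => ((l9_stepI hi L9.S (l9_stepS hs L9.T (l9_stepI hi L9.D h)))).trans ((l9_stepS hs L9.S (l9_stepI hi L9.B (l9_stepS hs L9.U (l9_stepI hi L9.T (l9_stepS hs L9.S (l9_stepI hi L9.D h)))))))
  | L9.U, L9.U, hne, _ => absurd rfl hne
  | L9.U, L9.A, _, h => ((l9_stepI hi L9.S h)).trans ((l9_stepS hs L9.S (l9_stepI hi L9.B (l9_stepS hs L9.U h))))
  | L9.U, L9.B, _, h => ((l9_stepI hi L9.S (l9_stepS hs L9.U h))).trans ((l9_stepS hs L9.S (l9_stepI hi L9.B h)))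
  | L9.U, L9.C, _, h => ((l9_stepI hi L9.S (l9_stepS hs L9.T (l9_stepI hi L9.D h)))).trans ((l9_stepS hs L9.S (l9_stepI hi L9.B (l9_stepS hs L9.U (l9_stepI hi L9.T (l9_stepS hs L9.S (l9_stepI hi L9.D h)))))))
  | L9.U, L9.F, _, h => ((l9_stepI hi L9.S h)).trans ((l9_stepS hs L9.S (l9_stepI hi L9.B h)))
  | L9.A, L9.E, _, h => ((l9_stepI hi L9.S h).symm).trans ((l9_stepS hs L9.S (l9_stepI hi L9.B (l9_stepS hs L9.U h))).symm)
  | L9.A, L9.S, _, h => ((l9_stepI hi L9.S (l9_stepS hs L9.D (l9_stepI hi L9.T h))).symm).trans ((l9_stepS hs L9.S (l9_stepI hi L9.B (l9_stepS hs L9.U (l9_stepI hi L9.T h)))).symm)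
  | L9.A, L9.T, _, h => ((l9_stepI hi L9.S h).symm).trans ((l9_stepS hs L9.S (l9_stepI hi L9.B (l9_stepS hs L9.U (l9_stepI hi L9.S h)))).symm)
  | L9.A, L9.D, _, h => ((l9_stepI hi L9.S h).symm).trans ((l9_stepS hs L9.S (l9_stepI hi L9.U (l9_stepS hs L9.B h))).symm)
  | L9.A, L9.U, _, h => ((l9_stepI hi L9.S (l9_stepS hs L9.T (l9_stepI hi L9.U h)))).trans ((l9_stepS hs L9.S (l9_stepI hi L9.U h)))
  | L9.A, L9.A, hne, _ => absurd rfl hne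
  | L9.A, L9.B, _, h => ((l9_stepI hi L9.S (l9_stepS hs L9.U (l9_stepI hi L9.B h)))).trans ((l9_stepS hs L9.S (l9_stepI hi L9.U (l9_stepS hs L9.S h))))
  | L9.A, L9.C, _, h => ((l9_stepI hi L9.S (l9_stepS hs L9.T (l9_stepI hi L9.U h)))).trans ((l9_stepS hs L9.S (l9_stepI hi L9.U h)))
  | L9.A, L9.F, _, h => ((l9_stepI hi L9.S (l9_stepS hs L9.T (l9_stepI hi L9.U h)))).trans ((l9_stepS hs L9.S (l9_stepI hi L9.U h)))
  | L9.B, L9.E, _, h => ((l9_stepI hi L9.S (l9_stepS hs L9.T h)).symm).trans ((l9_stepS hs L9.S h).symm)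
  | L9.B, L9.S, _, h => ((l9_stepI hi L9.S h)).trans ((l9_stepS hs L9.S (l9_stepI hi L9.U (l9_stepS hs L9.B h))))
  | L9.B, L9.T, _, h => ((l9_stepI hi L9.S (l9_stepS hs L9.D h))).trans ((l9_stepS hs L9.S (l9_stepI hi L9.U (l9_stepS hs L9.B h))))
  | L9.B, L9.D, _, h => ((l9_stepI hi L9.S (l9_stepS hs L9.U h)).symm).trans ((l9_stepS hs L9.S (l9_stepI hi L9.U (l9_stepS hs L9.S h))).symm)
  | L9.B, L9.U, _, h => ((l9_stepI hi L9.S (l9_stepS hs L9.B h))).trans ((l9_stepS hs L9.S (l9_stepI hi L9.U h)))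
  | L9.B, L9.A, _, h => ((l9_stepI hi L9.S h)).trans ((l9_stepS hs L9.S (l9_stepI hi L9.U (l9_stepS hs L9.B h))))
  | L9.B, L9.B, hne, _ => absurd rfl hne
  | L9.B, L9.C, _, h => ((l9_stepI hi L9.S (l9_stepS hs L9.B h))).trans ((l9_stepS hs L9.S (l9_stepI hi L9.U h)))
  | L9.B, L9.F, _, h => ((l9_stepI hi L9.S h)).trans ((l9_stepS hs L9.S (l9_stepI hi L9.U h)))
  | L9.C, L9.E, _, h => ((l9_stepI hi L9.S (l9_stepS hs L9.T h)).symm).trans ((l9_stepS hs L9.S h).symm)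
  | L9.C, L9.S, _, h => ((l9_stepI hi L9.S h)).trans ((l9_stepS hs L9.S (l9_stepI hi L9.B (l9_stepS hs L9.U (l9_stepI hi L9.S h)))))
  | L9.C, L9.T, _, h => ((l9_stepI hi L9.S (l9_stepS hs L9.D h))).trans ((l9_stepS hs L9.S (l9_stepI hi L9.B (l9_stepS hs L9.U (l9_stepI hi L9.T h)))))
  | L9.C, L9.D, _, h => ((l9_stepI hi L9.S (l9_stepS hs L9.B h)).symm).trans ((l9_stepS hs L9.S (l9_stepI hi L9.U h)).symm)
  | L9.C, L9.U, _, h => ((l9_stepI hi L9.S (l9_stepS hs L9.T (l9_stepI hi L9.D h))).symm).trans ((l9_stepS hs L9.S (l9_stepI hi L9.B (l9_stepS hs L9.U (l9_stepI hi L9.T (l9_stepS hs L9.S (l9_stepI hi L9.D h)))))).symm)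
  | L9.C, L9.A, _, h => ((l9_stepI hi L9.S h)).trans ((l9_stepS hs L9.S (l9_stepI hi L9.B (l9_stepS hs L9.U (l9_stepI hi L9.S h)))))
  | L9.C, L9.B, _, h => ((l9_stepI hi L9.S (l9_stepS hs L9.U h))).trans ((l9_stepS hs L9.S (l9_stepI hi L9.U (l9_stepS hs L9.S (l9_stepI hi L9.B h)))))
  | L9.C, L9.C, hne, _ => absurd rfl hne
  | L9.C, L9.F, _, h => ((l9_stepI hi L9.S h)).trans ((l9_stepS hs L9.S (l9_stepI hi L9.B (l9_stepS hs L9.U (l9_stepI hi L9.S h)))))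
  | L9.F, L9.E, _, h => ((l9_stepI hi L9.S h).symm).trans ((l9_stepS hs L9.S h).symm)
  | L9.F, L9.S, _, h => ((l9_stepI hi L9.S (l9_stepS hs L9.D (l9_stepI hi L9.T h))).symm).trans (h.symm)
  | L9.F, L9.T, _, h => ((l9_stepI hi L9.S h).symm).trans ((l9_stepS hs L9.S (l9_stepI hi L9.U h)).symm)
  | L9.F, L9.D, _, h => ((l9_stepI hi L9.S h).symm).trans ((l9_stepS hs L9.S (l9_stepI hi L9.U h)).symm)
  | L9.F, L9.U, _, h => ((l9_stepI hi L9.S h).symm).trans ((l9_stepS hs L9.S (l9_stepI hi L9.B h)).symm)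
  | L9.F, L9.A, _, h => ((l9_stepI hi L9.S (l9_stepS hs L9.T (l9_stepI hi L9.U h))).symm).trans ((l9_stepS hs L9.S (l9_stepI hi L9.U h)).symm)
  | L9.F, L9.B, _, h => ((l9_stepI hi L9.S h).symm).trans ((l9_stepS hs L9.S (l9_stepI hi L9.U h)).symm)
  | L9.F, L9.C, _, h => ((l9_stepI hi L9.S h).symm).trans ((l9_stepS hs L9.S (l9_stepI hi L9.B (l9_stepS hs L9.U (l9_stepI hi L9.S h)))).symm)
  | L9.F, L9.F, hne, _ => absurd rfl hne

end L9Simple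

section CoprimeDecomp

variable {G : Type*} [Group G] [Finite G] {n : ℕ} {Gs : Fin n → Subgroup G}

private lemma aux_disjoint (hnorm : ∀ i, (Gs i).Normal)
    (hcop : ∀ i j, i ≠ j → Nat.Coprime (Nat.card ↥(Gs i)) (Nat.card ↥(Gs j)))
    {i j : Fin n} (hij : i ≠ j) : Gs i ⊓ Gs j = ⊥ := by
  have h1 : Nat.card ↥(Gs i ⊓ Gs j) ∣ Nat.card ↥(Gs i) :=
    Subgroup.card_dvd_of_le inf_le_left
  have h2 : Nat.card ↥(Gs i ⊓ Gs j) ∣ Nat.card ↥(Gs j) :=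
    Subgroup.card_dvd_of_le inf_le_right
  have := Nat.eq_one_of_dvd_coprimes (hcop i j hij) h1 h2
  exact Subgroup.card_eq_one.mp this

private lemma aux_comm (hnorm : ∀ i, (Gs i).Normal)
    (hcop : ∀ i j, i ≠ j → Nat.Coprime (Nat.card ↥(Gs i)) (Nat.card ↥(Gs j)))
    {K : Fin n → Subgroup G} (hle : ∀ i, K i ≤ Gs i) :
    Pairwise fun i j => ∀ x y : G, x ∈ K i → y ∈ K j → Commute x y := by
  intro i j hij x y hx hy
  exact Subgroup.commute_of_normal_of_disjoint _ _ (hnorm i) (hnorm j)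
    (disjoint_iff.mpr (aux_disjoint hnorm hcop hij)) x y (hle i hx) (hle j hy)

/-- Every element of `⨆ K i` (with `K i ≤ Gs i`) is a product of components, each of
which is a power of the element. -/
private lemma aux_components (hnorm : ∀ i, (Gs i).Normal)
    (hcop : ∀ i j, i ≠ j → Nat.Coprime (Nat.card ↥(Gs i)) (Nat.card ↥(Gs j)))
    {K : Fin n → Subgroup G} (hle : ∀ i, K i ≤ Gs i) {x : G} (hx : x ∈ ⨆ i, K i) :
    ∃ k : ∀ i, ↥(K i), x = Subgroup.noncommPiCoprod (aux_comm hnorm hcop hle) k ∧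
      ∀ i, ∃ m : ℕ, x ^ m = ↑(k i) := by
  have hcm := aux_comm hnorm hcop hle
  rw [← Subgroup.noncommPiCoprod_range (hcomm := hcm)] at hx
  obtain ⟨k, hk⟩ := hx
  refine ⟨k, hk.symm, fun i => ?_⟩
  set m : ℕ := ∏ j ∈ Finset.univ.erase i, Nat.card ↥(Gs j) with hm
  have hpow : x ^ m = (↑(k i) : G) ^ m := by
    have h1 : k ^ m = Pi.mulSingle i (k i ^ m) := by
      funext j
      by_cases hji : j = i
      · subst hji; simp
      · have : (k j) ^ m = 1 := by
          rw [← orderOf_dvd_iff_pow_eq_one]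
          calc orderOf (k j) ∣ Nat.card ↥(K j) := orderOf_dvd_natCard _
            _ ∣ Nat.card ↥(Gs j) := Subgroup.card_dvd_of_le (hle j)
            _ ∣ m := Finset.dvd_prod_of_mem _ (Finset.mem_erase.mpr ⟨hji, Finset.mem_univ j⟩)
        simp [Pi.pow_apply, this, Pi.mulSingle_eq_of_ne hji]
    calc x ^ m = Subgroup.noncommPiCoprod hcm (k ^ m) := by rw [← hk, map_pow]
      _ = Subgroup.noncommPiCoprod hcm (Pi.mulSingle i (k i ^ m)) := by rw [h1]
      _ = ↑(k i ^ m) := Subgroup.noncommPiCoprod_mulSingle i _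
      _ = (↑(k i) : G) ^ m := rfl
  have hcoprime : m.Coprime (orderOf (↑(k i) : G)) := by
    have hord : orderOf (↑(k i) : G) ∣ Nat.card ↥(Gs i) := by
      have : orderOf (↑(k i) : G) = orderOf (⟨↑(k i), hle i (k i).2⟩ : ↥(Gs i)) := by
        rw [← orderOf_injective (Gs i).subtype (Gs i).subtype_injective
          ⟨↑(k i), hle i (k i).2⟩]
        rfl
      rw [this]; exact orderOf_dvd_natCard _
    refine Nat.Coprime.coprime_dvd_right hord ?_
    exact Nat.Coprime.prod_left fun j hj => hcop j i (Finset.mem_erase.mp hj).1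
  obtain ⟨mm, hmm⟩ := exists_pow_eq_self_of_coprime hcoprime
  exact ⟨m * mm, by rw [pow_mul, hpow, hmm]⟩

/-- Key lemma A: every subgroup decomposes along the factors. -/
private lemma aux_keyA (hnorm : ∀ i, (Gs i).Normal)
    (hcop : ∀ i j, i ≠ j → Nat.Coprime (Nat.card ↥(Gs i)) (Nat.card ↥(Gs j)))
    (hsup : (⨆ i, Gs i) = ⊤) (H : Subgroup G) : H ≤ ⨆ i, H ⊓ Gs i := by
  intro x hxH
  have hx : x ∈ ⨆ i, Gs i := by rw [hsup]; trivial
  obtain ⟨k, hk, hpow⟩ := aux_components hnorm hcop (fun i => le_rfl) hx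
  have hkH : ∀ i, (↑(k i) : G) ∈ H ⊓ Gs i := by
    intro i
    obtain ⟨m, hm⟩ := hpow i
    exact ⟨hm ▸ pow_mem hxH m, (k i).2⟩
  have hcm' := aux_comm hnorm hcop (fun i => (inf_le_right : H ⊓ Gs i ≤ Gs i))
  rw [← Subgroup.noncommPiCoprod_range (hcomm := hcm')]
  refine ⟨fun i => ⟨↑(k i), hkH i⟩, ?_⟩
  rw [hk]
  simp only [Subgroup.noncommPiCoprod, MonoidHom.noncommPiCoprod_apply]
  rfl

/-- Key lemma B: the decomposition is independent. -/
private lemma aux_keyB (hnorm : ∀ i, (Gs i).Normal)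
    (hcop : ∀ i j, i ≠ j → Nat.Coprime (Nat.card ↥(Gs i)) (Nat.card ↥(Gs j)))
    {K : Fin n → Subgroup G} (hle : ∀ i, K i ≤ Gs i) (i : Fin n) :
    (⨆ j, K j) ⊓ Gs i ≤ K i := by
  rintro x ⟨hx1, hx2⟩
  obtain ⟨k, hk, hpow⟩ := aux_components hnorm hcop hle hx1
  have hone : ∀ j, j ≠ i → k j = 1 := by
    intro j hji
    obtain ⟨m, hm⟩ := hpow j
    have : (↑(k j) : G) ∈ Gs j ⊓ Gs i :=
      ⟨hle j (k j).2, hm ▸ pow_mem hx2 m⟩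
    rw [aux_disjoint hnorm hcop hji] at this
    exact Subtype.ext this
  have : k = Pi.mulSingle i (k i) := by
    funext j
    by_cases hji : j = i
    · subst hji; simp
    · rw [hone j hji, Pi.mulSingle_eq_of_ne hji]
  rw [hk, this, Subgroup.noncommPiCoprod_mulSingle]
  exact (k i).2

private lemma aux_sup_inf (hnorm : ∀ i, (Gs i).Normal)
    (hcop : ∀ i j, i ≠ j → Nat.Coprime (Nat.card ↥(Gs i)) (Nat.card ↥(Gs j)))
    (hsup : (⨆ i, Gs i) = ⊤) (X Y : Subgroup G) (i : Fin n) :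
    (X ⊔ Y) ⊓ Gs i = (X ⊓ Gs i) ⊔ (Y ⊓ Gs i) := by
  refine le_antisymm ?_ (sup_le (inf_le_inf_right _ le_sup_left) (inf_le_inf_right _ le_sup_right))
  have hXY : X ⊔ Y ≤ ⨆ j, (X ⊓ Gs j) ⊔ (Y ⊓ Gs j) := by
    refine sup_le ((aux_keyA hnorm hcop hsup X).trans ?_)
      ((aux_keyA hnorm hcop hsup Y).trans ?_) <;>
      exact iSup_mono fun j => by simp [le_sup_left, le_sup_right]
  refine (inf_le_inf_right _ hXY).trans ?_
  exact aux_keyB hnorm hcop (fun j => sup_le inf_le_right inf_le_right) i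

end CoprimeDecomp

/-- **Lemma.** If `G = G₁ × ⋯ × Gₙ` is an internal direct product of normal subgroups of
pairwise coprime orders, then `G` is `L₉`-free iff every `Gᵢ` is `L₉`-free. -/
theorem isL9Free_iff_factors (G : Type*) [Group G] [Finite G] (n : ℕ)
    (Gs : Fin n → Subgroup G)
    (hnorm : ∀ i, (Gs i).Normal)
    (hcop : ∀ i j, i ≠ j → Nat.Coprime (Nat.card ↥(Gs i)) (Nat.card ↥(Gs j)))
    (hsup : (⨆ i, Gs i) = ⊤)
    (hcard : (∏ i, Nat.card ↥(Gs i)) = Nat.card G) :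
    IsL9Free G ↔ ∀ i, IsL9Free ↥(Gs i) := by
  constructor
  · -- L₉-freeness passes to subgroups
    rintro hG i ⟨f, finj, fsup, finf⟩
    refine hG ⟨fun a => (f a).map (Gs i).subtype, ?_, ?_, ?_⟩
    · exact fun a b hab => finj (Subgroup.map_injective (Gs i).subtype_injective hab)
    · intro a b
      show (f (a ⊔ b)).map (Gs i).subtype = (f a).map (Gs i).subtype ⊔ (f b).map (Gs i).subtype
      rw [fsup, Subgroup.map_sup]
    · intro a b
      show (f (a ⊓ b)).map (Gs i).subtype = (f a).map (Gs i).subtype ⊓ (f b).map (Gs i).subtype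
      rw [finf, Subgroup.map_inf _ _ _ (Gs i).subtype_injective]
  · rintro hfac ⟨f, finj, fsup, finf⟩
    -- project `f` to each factor
    have key : ∀ i : Fin n, f L9.E ⊓ Gs i = f L9.F ⊓ Gs i := by
      intro i
      have fisup : ∀ a b : L9, (f (a ⊔ b) ⊓ Gs i).subgroupOf (Gs i) =
          (f a ⊓ Gs i).subgroupOf (Gs i) ⊔ (f b ⊓ Gs i).subgroupOf (Gs i) := by
        intro a b
        rw [fsup, aux_sup_inf hnorm hcop hsup (f a) (f b) i,
          Subgroup.subgroupOf_sup inf_le_right inf_le_right]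
      have fiinf : ∀ a b : L9, (f (a ⊓ b) ⊓ Gs i).subgroupOf (Gs i) =
          (f a ⊓ Gs i).subgroupOf (Gs i) ⊓ (f b ⊓ Gs i).subgroupOf (Gs i) := by
        intro a b
        rw [finf, inf_inf_distrib_right]
        exact Subgroup.comap_inf _ _ _
      have finotinj : ¬ Function.Injective (fun a : L9 => (f a ⊓ Gs i).subgroupOf (Gs i)) := by
        intro hinj
        exact hfac i ⟨fun a : L9 => (f a ⊓ Gs i).subgroupOf (Gs i), hinj, fisup, fiinf⟩
      obtain ⟨a, b, hab, hne⟩ := Function.not_injective_iff.mp finotinj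
      have hEF : (f L9.E ⊓ Gs i).subgroupOf (Gs i) = (f L9.F ⊓ Gs i).subgroupOf (Gs i) :=
        l9_collapse (g := fun a : L9 => (f a ⊓ Gs i).subgroupOf (Gs i)) fisup fiinf a b hne hab
      have := congrArg (Subgroup.map (Gs i).subtype) hEF
      rwa [Subgroup.subgroupOf_map_subtype, Subgroup.subgroupOf_map_subtype,
        inf_assoc, inf_idem, inf_assoc, inf_idem] at this
    have hEF : f L9.E = f L9.F := by
      refine le_antisymm ?_ ?_
      · refine (aux_keyA hnorm hcop hsup (f L9.E)).trans (iSup_le fun i => ?_)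
        rw [key i]; exact inf_le_left
      · refine (aux_keyA hnorm hcop hsup (f L9.F)).trans (iSup_le fun i => ?_)
        rw [← key i]; exact inf_le_left
    exact absurd (finj hEF) (by decide)
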